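/- Let M ∈ ℝ^{m×s} have rank s and let v ∈ ℝ^m with ‖v‖₂ = 1 and v ∉ range(M). Set W := Mᵀ(I − vvᵀ)M, which is then symmetric positive definite. Then the largest eigenvalue of W⁻¹ satisfies λ_max(W⁻¹) ≤ 1/σ_min(M)² + ‖M†v‖₂² / (1 − vᵀM M†v), where M† := (MᵀM)⁻¹Mᵀ and σ_min(M) is the smallest singular value of M. -/

import Mathlib

open Matrix Filter Topology
open scoped BigOperators Classical

noncomputable def l2 {k : ℕ} (x : Fin k → ℝ) : ℝ := Real.sqrt (∑ i, (x i) ^ 2)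

noncomputable def l1 {k : ℕ} (x : Fin k → ℝ) : ℝ := ∑ i, |x i|

noncomputable def linf {k : ℕ} (x : Fin k → ℝ) : ℝ := sSup (Set.range fun i => |x i|)

noncomputable def dotp {k : ℕ} (x y : Fin k → ℝ) : ℝ := ∑ i, x i * y i

noncomputable def pinv {m s : ℕ} (M : Matrix (Fin m) (Fin s) ℝ) :
    Matrix (Fin s) (Fin m) ℝ := (Mᵀ * M)⁻¹ * Mᵀ

/-- smallest singular value of a full-column-rank matrix, characterized as the
minimum of ‖Mx‖₂ over unit vectors x. -/
noncomputable def sigmaMin {m s : ℕ} (M : Matrix (Fin m) (Fin s) ℝ) : ℝ :=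
  sInf {r | ∃ x : Fin s → ℝ, l2 x = 1 ∧ r = l2 (M.mulVec x)}

/-- largest eigenvalue of a symmetric matrix, via the Rayleigh quotient. -/
noncomputable def lambdaMax {s : ℕ} (S : Matrix (Fin s) (Fin s) ℝ) : ℝ :=
  sSup {r | ∃ x : Fin s → ℝ, l2 x = 1 ∧ r = dotp x (S.mulVec x)}

/-! ### Auxiliary lemmas -/

lemma dotp_eq {k : ℕ} (x y : Fin k → ℝ) : dotp x y = x ⬝ᵥ y := rfl

lemma l2_sq {k : ℕ} (x : Fin k → ℝ) : l2 x ^ 2 = x ⬝ᵥ x := by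
  rw [l2, Real.sq_sqrt (by positivity)]
  simp [dotProduct, sq]

lemma l2_nonneg {k : ℕ} (x : Fin k → ℝ) : 0 ≤ l2 x := Real.sqrt_nonneg _

lemma l2_eq_zero {k : ℕ} {x : Fin k → ℝ} (h : l2 x = 0) : x = 0 := by
  have := l2_sq x
  rw [h] at this
  exact dotProduct_self_eq_zero.mp (by linarith [this])

lemma l2_pos {k : ℕ} {x : Fin k → ℝ} (h : x ≠ 0) : 0 < l2 x :=
  (l2_nonneg x).lt_of_ne' (fun h0 => h (l2_eq_zero h0))

lemma l2_smul {k : ℕ} (a : ℝ) (x : Fin k → ℝ) : l2 (a • x) = |a| * l2 x := by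
  rw [l2, l2]
  rw [← Real.sqrt_sq_eq_abs, ← Real.sqrt_mul (sq_nonneg a), Finset.mul_sum]
  congr 1
  exact Finset.sum_congr rfl fun i _ => by simp [mul_pow]

lemma cs_sq {k : ℕ} (x y : Fin k → ℝ) : (x ⬝ᵥ y) ^ 2 ≤ (l2 x)^2 * (l2 y)^2 := by
  rw [l2_sq, l2_sq]
  have := Finset.sum_mul_sq_le_sq_mul_sq Finset.univ x y
  simpa [dotProduct, sq] using this

lemma mul_vecMulVec' {s t u : ℕ} (A : Matrix (Fin s) (Fin t) ℝ) (a : Fin t → ℝ) (b : Fin u → ℝ) :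
    A * vecMulVec a b = vecMulVec (A.mulVec a) b := by
  ext i j
  rw [Matrix.mul_apply, vecMulVec_apply, mulVec, dotProduct, Finset.sum_mul]
  exact Finset.sum_congr rfl fun k _ => by rw [vecMulVec_apply]; ring

lemma vecMulVec_mul' {s t u : ℕ} (a : Fin s → ℝ) (b : Fin t → ℝ) (A : Matrix (Fin t) (Fin u) ℝ) :
    vecMulVec a b * A = vecMulVec a (Aᵀ.mulVec b) := by
  ext i j
  rw [Matrix.mul_apply, vecMulVec_apply, mulVec, dotProduct, Finset.mul_sum]
  exact Finset.sum_congr rfl fun k _ => by rw [vecMulVec_apply, transpose_apply]; ring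

lemma vecMulVec_mulVec' {s t : ℕ} (a : Fin s → ℝ) (b : Fin t → ℝ) (x : Fin t → ℝ) :
    (vecMulVec a b).mulVec x = (b ⬝ᵥ x) • a := by
  ext i
  rw [mulVec, dotProduct, dotProduct, Pi.smul_apply, smul_eq_mul, Finset.sum_mul]
  exact Finset.sum_congr rfl fun k _ => by rw [vecMulVec_apply]; ring

lemma vecMulVec_smul_right {s t : ℕ} (a : Fin s → ℝ) (c : ℝ) (b : Fin t → ℝ) :
    vecMulVec a (c • b) = c • vecMulVec a b := by
  ext i j
  simp [vecMulVec_apply]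
  ring

lemma inj_of_rank {m s : ℕ} {M : Matrix (Fin m) (Fin s) ℝ} (hrank : M.rank = s) :
    Function.Injective M.mulVec := by
  have hfin : Module.finrank ℝ (LinearMap.range M.mulVecLin) = s := hrank
  have h := LinearMap.finrank_range_add_finrank_ker M.mulVecLin
  rw [hfin] at h
  simp only [Module.finrank_pi, Fintype.card_fin] at h
  have hker : LinearMap.ker M.mulVecLin = ⊥ :=
    Submodule.finrank_eq_zero.mp (by omega)
  have := LinearMap.ker_eq_bot.mp hker
  simpa [Function.Injective, mulVecLin_apply] using this

lemma quad_eq {m s : ℕ} (M : Matrix (Fin m) (Fin s) ℝ) (v : Fin m → ℝ)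
    (hvv : v ⬝ᵥ v = 1) (x : Fin s → ℝ) :
    x ⬝ᵥ (Mᵀ * (1 - vecMulVec v v) * M).mulVec x
      = (M.mulVec x - (v ⬝ᵥ M.mulVec x) • v) ⬝ᵥ (M.mulVec x - (v ⬝ᵥ M.mulVec x) • v) := by
  set y := M.mulVec x with hy
  set c := v ⬝ᵥ y with hc
  have h1 : (Mᵀ * (1 - vecMulVec v v) * M).mulVec x = Mᵀ.mulVec (y - c • v) := by
    rw [← mulVec_mulVec, ← mulVec_mulVec]
    rw [sub_mulVec, one_mulVec, vecMulVec_mulVec', hy]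
  rw [h1, dotProduct_mulVec, vecMul_transpose, ← hy]
  rw [dotProduct_sub, dotProduct_sub, sub_dotProduct, sub_dotProduct]
  rw [dotProduct_smul, dotProduct_smul, smul_dotProduct, smul_dotProduct]
  rw [dotProduct_comm y v, ← hc, hvv]
  simp only [smul_eq_mul]
  ring

lemma l2_continuous {k : ℕ} : Continuous (l2 : (Fin k → ℝ) → ℝ) := by
  unfold l2
  exact Real.continuous_sqrt.comp (continuous_finset_sum _ fun i _ => (continuous_apply i).pow 2)

lemma sigma_bounds {m s : ℕ} (M : Matrix (Fin m) (Fin s) ℝ)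
    (hinj : Function.Injective M.mulVec) (x₁ : Fin s → ℝ) (hx₁ : l2 x₁ = 1) :
    0 < sigmaMin M ∧ ∀ z : Fin s → ℝ, sigmaMin M * l2 z ≤ l2 (M.mulVec z) := by
  classical
  set K : Set (Fin s → ℝ) := {x | l2 x = 1} with hK
  have hfc : Continuous fun x : Fin s → ℝ => l2 (M.mulVec x) := by
    apply l2_continuous.comp
    apply continuous_pi
    intro i
    show Continuous fun x : Fin s → ℝ => ∑ j, M i j * x j
    exact continuous_finset_sum _ fun j _ => continuous_const.mul (continuous_apply j)
  have hKc : IsClosed K := isClosed_eq l2_continuous continuous_const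
  have hKb : Bornology.IsBounded K := by
    apply (Metric.isBounded_closedBall (x := (0 : Fin s → ℝ)) (r := 1)).subset
    intro x hx
    rw [Metric.mem_closedBall, dist_zero_right]
    refine (pi_norm_le_iff_of_nonneg zero_le_one).mpr fun i => ?_
    rw [Real.norm_eq_abs, ← Real.sqrt_sq_eq_abs]
    calc Real.sqrt (x i ^ 2) ≤ Real.sqrt (∑ j, x j ^ 2) :=
          Real.sqrt_le_sqrt (Finset.single_le_sum (fun j _ => sq_nonneg (x j))
            (Finset.mem_univ i))
      _ = 1 := hx
  have hKcomp : IsCompact K := Metric.isCompact_of_isClosed_isBounded hKc hKb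
  have hSeq : {r | ∃ x : Fin s → ℝ, l2 x = 1 ∧ r = l2 (M.mulVec x)}
      = (fun x => l2 (M.mulVec x)) '' K := by
    ext r
    constructor
    · rintro ⟨x, hx, rfl⟩; exact ⟨x, hx, rfl⟩
    · rintro ⟨x, hx, rfl⟩; exact ⟨x, hx, rfl⟩
  have hbdd : BddBelow {r | ∃ x : Fin s → ℝ, l2 x = 1 ∧ r = l2 (M.mulVec x)} :=
    ⟨0, by rintro r ⟨x, hx, rfl⟩; exact l2_nonneg _⟩
  have hmem : sigmaMin M ∈ {r | ∃ x : Fin s → ℝ, l2 x = 1 ∧ r = l2 (M.mulVec x)} := by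
    rw [sigmaMin, hSeq]
    exact (hKcomp.image hfc).sInf_mem ⟨_, ⟨x₁, hx₁, rfl⟩⟩
  obtain ⟨x₀, hx₀K, hx₀⟩ := hmem
  have hl20 : l2 (0 : Fin s → ℝ) = 0 := by simp [l2]
  have hx₀ne : x₀ ≠ 0 := fun h => by rw [h, hl20] at hx₀K; exact one_ne_zero hx₀K.symm
  have hσpos : 0 < sigmaMin M := by
    rw [hx₀]
    apply l2_pos
    intro h
    apply hx₀ne
    apply hinj
    rw [h, M.mulVec_zero]
  refine ⟨hσpos, fun z => ?_⟩
  rcases eq_or_ne z 0 with rfl | hz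
  · rw [M.mulVec_zero, hl20, mul_zero]
    exact l2_nonneg _
  · have hlz : 0 < l2 z := l2_pos hz
    have hunit : l2 ((l2 z)⁻¹ • z) = 1 := by
      rw [l2_smul, abs_of_pos (inv_pos.mpr hlz), inv_mul_cancel₀ hlz.ne']
    have hle : sigmaMin M ≤ l2 (M.mulVec ((l2 z)⁻¹ • z)) :=
      csInf_le hbdd ⟨_, hunit, rfl⟩
    rw [M.mulVec_smul, l2_smul, abs_of_pos (inv_pos.mpr hlz)] at hle
    have := mul_le_mul_of_nonneg_right hle hlz.le
    calc sigmaMin M * l2 z ≤ (l2 z)⁻¹ * l2 (M.mulVec z) * l2 z := this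
      _ = l2 (M.mulVec z) := by field_simp

/-- if M has rank s, ‖v‖₂ = 1 and v ∉ range M, then
W := Mᵀ(I − vvᵀ)M is symmetric positive definite and
λ_max(W⁻¹) ≤ 1/σ_min(M)² + ‖M†v‖₂²/(1 − vᵀMM†v). -/
theorem stmt_1 {m s : ℕ} (M : Matrix (Fin m) (Fin s) ℝ) (v : Fin m → ℝ)
    (hrank : M.rank = s) (hv : l2 v = 1)
    (hvrge : v ∉ {w : Fin m → ℝ | ∃ x : Fin s → ℝ, M.mulVec x = w}) :
    (Mᵀ * (1 - vecMulVec v v) * M).PosDef ∧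
      lambdaMax ((Mᵀ * (1 - vecMulVec v v) * M)⁻¹)
        ≤ 1 / sigmaMin M ^ 2
          + l2 ((pinv M).mulVec v) ^ 2 / (1 - dotp v ((M * pinv M).mulVec v)) := by
  classical
  have hvv : v ⬝ᵥ v = 1 := by rw [← l2_sq, hv]; norm_num
  have hinj : Function.Injective M.mulVec := inj_of_rank hrank
  have hrange : ∀ x : Fin s → ℝ, M.mulVec x ≠ v := fun x h => hvrge ⟨x, h⟩
  set W := Mᵀ * (1 - vecMulVec v v) * M with hW
  -- Hermitian
  have hvvT : (vecMulVec v v)ᵀ = vecMulVec v v := by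
    ext i j; rw [transpose_apply, vecMulVec_apply, vecMulVec_apply]; ring
  have hherm : W.IsHermitian := by
    rw [Matrix.IsHermitian, conjTranspose_eq_transpose_of_trivial, hW,
      transpose_mul, transpose_mul, transpose_transpose, transpose_sub, transpose_one,
      hvvT, Matrix.mul_assoc]
  -- positivity
  have hquad : ∀ x : Fin s → ℝ, x ≠ 0 → 0 < x ⬝ᵥ W.mulVec x := by
    intro x hx
    rw [hW, quad_eq M v hvv x]
    set c := v ⬝ᵥ M.mulVec x with hc
    set d := M.mulVec x - c • v with hd
    rcases eq_or_ne d 0 with hd0 | hd0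
    · exfalso
      have hy0 : M.mulVec x ≠ 0 := fun h => hx (hinj (h.trans (M.mulVec_zero).symm))
      have hMx : M.mulVec x = c • v := by
        have := sub_eq_zero.mp hd0
        exact this
      have hcne : c ≠ 0 := fun h => hy0 (by rw [hMx, h, zero_smul])
      apply hrange (c⁻¹ • x)
      rw [M.mulVec_smul, hMx, smul_smul, inv_mul_cancel₀ hcne, one_smul]
    · rw [← l2_sq]
      exact pow_pos (l2_pos hd0) 2
  have hWpd : W.PosDef := Matrix.PosDef.of_dotProduct_mulVec_pos hherm fun x hx => by simpa using hquad x hx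
  refine ⟨hWpd, ?_⟩
  -- set up A, u, p, τ
  set A := Mᵀ * M with hA
  have hAherm : A.IsHermitian := by
    rw [hA, show Mᵀ = Mᴴ from (conjTranspose_eq_transpose_of_trivial M).symm]
    exact isHermitian_conjTranspose_mul_self M
  have hAT : Aᵀ = A := by
    rw [hA, transpose_mul, transpose_transpose]
  have hMtM : ∀ z : Fin s → ℝ, z ⬝ᵥ A.mulVec z = (M.mulVec z) ⬝ᵥ (M.mulVec z) := by
    intro z
    rw [hA, ← mulVec_mulVec, dotProduct_mulVec, vecMul_transpose]
  have hApd : A.PosDef := by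
    refine Matrix.PosDef.of_dotProduct_mulVec_pos hAherm fun x hx => ?_
    have hx' : x ≠ 0 := hx
    have : (0:ℝ) < x ⬝ᵥ A.mulVec x := by
      rw [hMtM x, ← l2_sq]
      refine pow_pos (l2_pos fun h => hx' (hinj (h.trans (M.mulVec_zero).symm))) 2
    simpa using this
  have hAdet : IsUnit A.det := hApd.det_pos.ne'.isUnit
  have hAinv : A * A⁻¹ = 1 := Matrix.mul_nonsing_inv A hAdet
  have hAinvT : A⁻¹ᵀ = A⁻¹ := by rw [Matrix.transpose_nonsing_inv, hAT]
  set u := Mᵀ.mulVec v with hu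
  set p := A⁻¹.mulVec u with hp
  have hppinv : (pinv M).mulVec v = p := by
    rw [pinv, ← mulVec_mulVec, ← hA, ← hu, hp]
  have hAp : A.mulVec p = u := by
    rw [hp, mulVec_mulVec, hAinv, one_mulVec]
  set τ := u ⬝ᵥ p with hτdef
  have hvMp : v ⬝ᵥ M.mulVec p = τ := by
    rw [dotProduct_mulVec, ← mulVec_transpose, ← hu, hτdef]
  have hMpMp : (M.mulVec p) ⬝ᵥ (M.mulVec p) = τ := by
    have := hMtM p
    rw [hAp] at this
    rw [← this, dotProduct_comm]
  have hτeq : dotp v ((M * pinv M).mulVec v) = τ := by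
    rw [dotp_eq, ← mulVec_mulVec, hppinv, hvMp]
  -- 1 - τ > 0
  have h1τ : 0 < 1 - τ := by
    have hne : v - M.mulVec p ≠ 0 := by
      intro h
      exact hrange p (sub_eq_zero.mp h).symm
    have hcalc : (v - M.mulVec p) ⬝ᵥ (v - M.mulVec p) = 1 - τ := by
      rw [dotProduct_sub, sub_dotProduct, sub_dotProduct, hvv, hvMp, hMpMp,
        dotProduct_comm (M.mulVec p) v, hvMp]
      ring
    rw [← hcalc, ← l2_sq]
    exact pow_pos (l2_pos hne) 2
  set c := (1 - τ)⁻¹ with hcdef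
  have hcpos : 0 < c := inv_pos.mpr h1τ
  -- Sherman–Morrison
  have hWA : W = A - vecMulVec u u := by
    rw [hW, Matrix.mul_sub, Matrix.mul_one, Matrix.sub_mul, ← hA]
    congr 1
    rw [mul_vecMulVec', ← hu, vecMulVec_mul', ← hu]
  set B := A⁻¹ + c • vecMulVec p p with hB
  have hWB : W * B = 1 := by
    have hppT : (vecMulVec p p)ᵀ = vecMulVec p p := by
      ext i j; rw [transpose_apply, vecMulVec_apply, vecMulVec_apply]; ring
    rw [hWA, hB, Matrix.sub_mul, Matrix.mul_add, Matrix.mul_add, hAinv]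
    rw [Matrix.mul_smul, Matrix.mul_smul, mul_vecMulVec', hAp]
    rw [vecMulVec_mul', hAinvT, ← hp]
    rw [vecMulVec_mul', hppT, vecMulVec_mulVec', vecMulVec_smul_right,
      dotProduct_comm p u, ← hτdef, smul_smul]
    set X := vecMulVec u p with hX
    have h2 : c - c * τ = 1 := by
      have h3 : c * (1 - τ) = 1 := by rw [hcdef]; exact inv_mul_cancel₀ h1τ.ne'
      nlinarith [h3]
    have hsm : c • X - (c * τ) • X = X := by
      rw [← sub_smul, h2, one_smul]
    have hab : (1 : Matrix (Fin s) (Fin s) ℝ) + c • X - (X + (c * τ) • X)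
        = 1 + ((c • X - (c * τ) • X) - X) := by abel
    rw [hab, hsm, sub_self, add_zero]
  have hWinv : W⁻¹ = B := inv_eq_right_inv hWB
  -- sigma facts will be needed per element
  rw [hτeq, hppinv]
  rw [lambdaMax, hWinv]
  apply Real.sSup_le
  · rintro r ⟨x, hx1, rfl⟩
    obtain ⟨hσpos, hσlow⟩ := sigma_bounds M hinj x hx1
    set σ := sigmaMin M with hσ
    -- value of the quadratic form
    have hBx : dotp x (B.mulVec x) = x ⬝ᵥ A⁻¹.mulVec x + c * (p ⬝ᵥ x) ^ 2 := by
      rw [dotp_eq, hB, add_mulVec, smul_mulVec, vecMulVec_mulVec',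
        dotProduct_add, dotProduct_smul, dotProduct_smul]
      rw [smul_eq_mul, smul_eq_mul, dotProduct_comm x p]
      ring
    rw [hBx]
    have hterm1 : x ⬝ᵥ A⁻¹.mulVec x ≤ 1 / σ ^ 2 := by
      set y := A⁻¹.mulVec x with hy
      have hxA : A.mulVec y = x := by rw [hy, mulVec_mulVec, hAinv, one_mulVec]
      have hq1 : x ⬝ᵥ y = l2 (M.mulVec y) ^ 2 := by
        rw [← hxA, dotProduct_comm, hMtM y, l2_sq]
      have hqnn : 0 ≤ x ⬝ᵥ y := by rw [hq1]; positivity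
      have hqle : x ⬝ᵥ y ≤ l2 y := by
        have h4 : (x ⬝ᵥ y) ^ 2 ≤ (l2 y) ^ 2 := by
          have := cs_sq x y
          rw [hx1] at this
          simpa using this
        calc x ⬝ᵥ y = Real.sqrt ((x ⬝ᵥ y) ^ 2) := (Real.sqrt_sq hqnn).symm
          _ ≤ Real.sqrt ((l2 y) ^ 2) := Real.sqrt_le_sqrt h4
          _ = l2 y := Real.sqrt_sq (l2_nonneg y)
      have hqge : (σ * l2 y) ^ 2 ≤ x ⬝ᵥ y := by
        rw [hq1]
        have := hσlow y
        have hnn : 0 ≤ σ * l2 y := mul_nonneg hσpos.le (l2_nonneg y)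
        exact pow_le_pow_left₀ hnn this 2
      rcases eq_or_ne (l2 y) 0 with hly | hly
      · have : x ⬝ᵥ y ≤ 0 := by
          have := hqle; rw [hly] at this; exact this
        have h5 : (0:ℝ) ≤ 1 / σ ^ 2 := by positivity
        linarith
      · have hlypos : 0 < l2 y := (l2_nonneg y).lt_of_ne' hly
        have h6 : σ ^ 2 * l2 y ≤ 1 := by
          have h7 : σ ^ 2 * (l2 y) ^ 2 ≤ l2 y := by
            have := hqge.trans hqle
            calc σ ^ 2 * (l2 y) ^ 2 = (σ * l2 y) ^ 2 := by ring
              _ ≤ l2 y := this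
          nlinarith
        have h8 : l2 y ≤ 1 / σ ^ 2 := by
          rw [le_div_iff₀ (by positivity)]
          linarith [h6]
        linarith [hqle, h8]
    have hterm2 : c * (p ⬝ᵥ x) ^ 2 ≤ l2 p ^ 2 / (1 - τ) := by
      have h9 : (p ⬝ᵥ x) ^ 2 ≤ l2 p ^ 2 := by
        have := cs_sq p x
        rw [hx1] at this
        simpa using this
      rw [div_eq_mul_inv, ← hcdef, mul_comm (l2 p ^ 2) c]
      exact mul_le_mul_of_nonneg_left h9 hcpos.le
    exact add_le_add hterm1 hterm2
  · have h10 : (0:ℝ) ≤ 1 / sigmaMin M ^ 2 := by positivity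
    have h11 : (0:ℝ) ≤ l2 p ^ 2 / (1 - τ) := div_nonneg (by positivity) h1τ.le
    linarith
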